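/- The matrix A = [[coshΘ, sinhΘ],[sinhΘ, coshΘ]] with Θ = ¼·log((ω+m)/(ω−m)) is invertible with det A = 1, and it diagonalizes the constant matrix M₀ = [[−iω, im],[−im, iω]]: A⁻¹M₀A = diag(−iΦ', iΦ') where Φ' = sgn(ω)√(ω²−m²). -/

import Mathlib

lemma stmt16_aux (ω m : ℝ) (hm : 0 < m) (hω : m < |ω|)
    (Θ : ℝ) (hΘ : Θ = (1/4) * Real.log ((ω + m)/(ω - m))) :
    ω * Real.cosh (2*Θ) - m * Real.sinh (2*Θ) = Real.sign ω * Real.sqrt (ω^2 - m^2) ∧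
    m * Real.cosh (2*Θ) - ω * Real.sinh (2*Θ) = 0 := by
  obtain ⟨q, hqdef⟩ : ∃ q, Real.sqrt (ω^2 - m^2) = q := ⟨_, rfl⟩
  rw [hqdef]
  have hsq : (0:ℝ) < ω^2 - m^2 := by nlinarith [abs_nonneg ω, sq_abs ω]
  have hq2 : q^2 = ω^2 - m^2 := by rw [← hqdef]; exact Real.sq_sqrt hsq.le
  have hqpos : 0 < q := by rw [← hqdef]; exact Real.sqrt_pos.mpr hsq
  have hne : ω - m ≠ 0 := by
    rcases abs_cases ω with ⟨h, _⟩ | ⟨h, _⟩ <;> intro hc <;> nlinarith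
  have hrid : (ω + m)/(ω - m) = (ω^2 - m^2)/(ω - m)^2 := by field_simp; ring
  have hE : Real.exp (2*Θ) = q / |ω - m| := by
    have hr : 0 < (ω + m)/(ω - m) := by
      rw [hrid]; exact div_pos hsq (by positivity)
    have h1 : Real.sqrt ((ω + m)/(ω - m)) = Real.exp (2*Θ) := by
      rw [Real.sqrt_eq_rpow, Real.rpow_def_of_pos hr, hΘ]
      ring_nf
    rw [← h1, hrid, Real.sqrt_div hsq.le, Real.sqrt_sq_eq_abs, hqdef]
  have hcosh : Real.cosh (2*Θ) = (Real.exp (2*Θ) + (Real.exp (2*Θ))⁻¹)/2 := by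
    rw [Real.cosh_eq, Real.exp_neg]
  have hsinh : Real.sinh (2*Θ) = (Real.exp (2*Θ) - (Real.exp (2*Θ))⁻¹)/2 := by
    rw [Real.sinh_eq, Real.exp_neg]
  rcases abs_cases ω with ⟨habs, hpos⟩ | ⟨habs, hneg⟩
  · have hωm : 0 < ω - m := by rw [habs] at hω; linarith
    rw [abs_of_pos hωm] at hE
    have hC : Real.cosh (2*Θ) = ω / q := by
      rw [hcosh, hE, inv_div]
      field_simp
      linear_combination hq2
    have hS : Real.sinh (2*Θ) = m / q := by
      rw [hsinh, hE, inv_div]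
      field_simp
      linear_combination hq2
    have hsgn : Real.sign ω = 1 := Real.sign_of_pos (by rw [habs] at hω; linarith)
    rw [hC, hS, hsgn]
    constructor
    · field_simp; linear_combination -hq2
    · field_simp; ring
  · have hωm : ω - m < 0 := by rw [habs] at hω; linarith
    rw [abs_of_neg hωm, neg_sub] at hE
    have hne2 : m - ω ≠ 0 := by intro h; apply hne; linarith
    have hC : Real.cosh (2*Θ) = -ω / q := by
      rw [hcosh, hE, inv_div]
      field_simp
      linear_combination hq2
    have hS : Real.sinh (2*Θ) = -m / q := by
      rw [hsinh, hE, inv_div]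
      field_simp
      linear_combination hq2
    have hsgn : Real.sign ω = -1 := Real.sign_of_neg (by rw [habs] at hω; linarith)
    rw [hC, hS, hsgn]
    constructor
    · field_simp; linear_combination hq2
    · field_simp; ring

/-- The matrix A = [[coshΘ, sinhΘ],[sinhΘ, coshΘ]] with Θ = ¼log((ω+m)/(ω−m)) has
determinant 1, is invertible, and diagonalizes M₀ = [[−iω, im],[−im, iω]]:
A⁻¹M₀A = diag(−iΦ', iΦ') with Φ' = sgn(ω)√(ω²−m²). -/
theorem stmt16 (ω m : ℝ) (hm : 0 < m) (hω : m < |ω|)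
    (Θ : ℝ) (hΘ : Θ = (1/4) * Real.log ((ω + m)/(ω - m)))
    (A M₀ : Matrix (Fin 2) (Fin 2) ℂ)
    (hA : A = !![((Real.cosh Θ : ℝ) : ℂ), ((Real.sinh Θ : ℝ) : ℂ);
                 ((Real.sinh Θ : ℝ) : ℂ), ((Real.cosh Θ : ℝ) : ℂ)])
    (hM : M₀ = !![-(Complex.I * (ω : ℂ)), Complex.I * (m : ℂ);
                  -(Complex.I * (m : ℂ)), Complex.I * (ω : ℂ)])
    (Φ' : ℝ) (hΦ : Φ' = Real.sign ω * Real.sqrt (ω^2 - m^2)) :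
    A.det = 1 ∧ IsUnit A ∧
    A⁻¹ * M₀ * A = !![-(Complex.I * (Φ' : ℂ)), 0; 0, Complex.I * (Φ' : ℂ)] := by
  obtain ⟨k1, k2⟩ := stmt16_aux ω m hm hω Θ hΘ
  rw [← hΦ] at k1
  -- real identities in cosh Θ, sinh Θ
  have hc2 : Real.cosh (2*Θ) = Real.cosh Θ^2 + Real.sinh Θ^2 := Real.cosh_two_mul Θ
  have hs2 : Real.sinh (2*Θ) = 2 * Real.sinh Θ * Real.cosh Θ := Real.sinh_two_mul Θ
  rw [hc2, hs2] at k1 k2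
  have hdet : Real.cosh Θ^2 - Real.sinh Θ^2 = 1 := Real.cosh_sq_sub_sinh_sq Θ
  -- complexified versions
  have K1 : (ω:ℂ) * ((Real.cosh Θ:ℂ)^2 + (Real.sinh Θ:ℂ)^2)
      - (m:ℂ) * (2 * (Real.sinh Θ:ℂ) * (Real.cosh Θ:ℂ)) = (Φ':ℂ) := by
    exact_mod_cast k1
  have K2 : (m:ℂ) * ((Real.cosh Θ:ℂ)^2 + (Real.sinh Θ:ℂ)^2)
      - (ω:ℂ) * (2 * (Real.sinh Θ:ℂ) * (Real.cosh Θ:ℂ)) = 0 := by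
    exact_mod_cast k2
  have D : ((Real.cosh Θ:ℂ))^2 - ((Real.sinh Θ:ℂ))^2 = 1 := by exact_mod_cast hdet
  have hdetA : A.det = 1 := by
    rw [hA, Matrix.det_fin_two_of]
    linear_combination D
  have hUnit : IsUnit A := by
    rw [Matrix.isUnit_iff_isUnit_det, hdetA]; exact isUnit_one
  refine ⟨hdetA, hUnit, ?_⟩
  have hAinv : A⁻¹ = !![((Real.cosh Θ : ℝ) : ℂ), -((Real.sinh Θ : ℝ) : ℂ);
                        -((Real.sinh Θ : ℝ) : ℂ), ((Real.cosh Θ : ℝ) : ℂ)] := by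
    rw [Matrix.inv_def, hdetA, Matrix.adjugate_fin_two, hA]
    simp [Matrix.of_apply]
  rw [hAinv, hA, hM]
  ext i j
  fin_cases i <;> fin_cases j <;>
    simp [Matrix.mul_apply, Fin.sum_univ_two] <;>
    simp only [Complex.ofReal_cosh, Complex.ofReal_sinh] at K1 K2 ⊢
  · linear_combination (-Complex.I) * K1
  · linear_combination Complex.I * K2
  · linear_combination (-Complex.I) * K2
  · linear_combination Complex.I * K1
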